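/- (Range of ultramodular functions) Let (ℓ, r) be an ultramodular interval-valued map on [0,1]. Then either ℓ x = 0 and r x = 1 for every x in the open interval (0,1) — so that the set of intervals { [ℓ x, r x] : x ∈ [0,1] } is exactly { [0,0], [1,1], [0,1] } — or the set { (ℓ x, r x) : x ∈ [0,1] } ⊆ ℝ × ℝ is uncountable. -/

import Mathlib

open Matrix
open scoped ComplexOrder

/-- A projector on `ℂ^d`: an idempotent, self-adjoint matrix. -/
def IsProjector {d : ℕ} (P : Matrix (Fin d) (Fin d) ℂ) : Prop :=
  P * P = P ∧ Pᴴ = P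

/-- A quantum interval-valued probability measure (QIVPM) on `ℂ^d`,
given by the pair of interval-endpoint functions `L ≤ R`. -/
def IsQIVPM {d : ℕ} (L R : Matrix (Fin d) (Fin d) ℂ → ℝ) : Prop :=
  (∀ P, IsProjector P → 0 ≤ L P ∧ L P ≤ R P ∧ R P ≤ 1) ∧
  (L 0 = 0 ∧ R 0 = 0) ∧
  (L 1 = 1 ∧ R 1 = 1) ∧
  (∀ P, IsProjector P → L (1 - P) = 1 - R P ∧ R (1 - P) = 1 - L P) ∧
  (∀ P₀ P₁, IsProjector P₀ → IsProjector P₁ → P₀ * P₁ = P₁ * P₀ →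
    L P₀ + L P₁ ≤ L (P₀ + P₁ - P₀ * P₁) + L (P₀ * P₁) ∧
    R (P₀ + P₁ - P₀ * P₁) + R (P₀ * P₁) ≤ R P₀ + R P₁)

/-- A QIVPM is `δ`-deterministic if every projector's interval lies in `[0,δ]` or `[1-δ,1]`. -/
def IsDeltaDet {d : ℕ} (δ : ℝ) (L R : Matrix (Fin d) (Fin d) ℂ → ℝ) : Prop :=
  ∀ P, IsProjector P → R P ≤ δ ∨ 1 - δ ≤ L P

/-- A QIVPM is `0`-deterministic if every projector is assigned `[0,0]` or `[1,1]`. -/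
def IsZeroDet {d : ℕ} (L R : Matrix (Fin d) (Fin d) ℂ → ℝ) : Prop :=
  ∀ P, IsProjector P → (L P = 0 ∧ R P = 0) ∨ (L P = 1 ∧ R P = 1)

/-- A state (density matrix) on `ℂ^d`. -/
def IsState {d : ℕ} (ρ : Matrix (Fin d) (Fin d) ℂ) : Prop :=
  ρ.PosSemidef ∧ ρ.trace = 1

/-- An interval-valued map on `[0,1]`. -/
def IsIntervalValuedMap (l r : ℝ → ℝ) : Prop :=
  ∀ x ∈ Set.Icc (0:ℝ) 1, 0 ≤ l x ∧ l x ≤ r x ∧ r x ≤ 1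

/-- An ultramodular interval-valued map on `[0,1]`. -/
def IsUltramodular (l r : ℝ → ℝ) : Prop :=
  IsIntervalValuedMap l r ∧
  (l 0 = 0 ∧ r 0 = 0) ∧
  (l 1 = 1 ∧ r 1 = 1) ∧
  (∀ x ∈ Set.Icc (0:ℝ) 1, l (1 - x) = 1 - r x ∧ r (1 - x) = 1 - l x) ∧
  (∀ x₀ x₁ x₂ : ℝ, 0 ≤ x₀ → 0 ≤ x₁ → 0 ≤ x₂ → x₀ + x₁ + x₂ ≤ 1 →
    l (x₀ + x₂) + l (x₁ + x₂) ≤ l (x₀ + x₁ + x₂) + l x₂ ∧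
    r (x₀ + x₁ + x₂) + r x₂ ≤ r (x₀ + x₂) + r (x₁ + x₂))

/-- Range of ultramodular functions: either the map is the three-valued one
`{[0,0], [1,1], [0,1]}`, or its range of intervals is uncountable. -/
-- monotonicity of l
lemma um_mono (l r : ℝ → ℝ) (hu : IsUltramodular l r) :
    ∀ s t : ℝ, 0 ≤ s → s ≤ t → t ≤ 1 → l s ≤ l t := by
  intro s t hs hst ht1
  obtain ⟨hiv, ⟨hl0, _⟩, _, _, hum⟩ := hu
  have h := (hum s (t - s) 0 hs (by linarith) le_rfl (by linarith)).1
  have h2 := (hiv (t - s) ⟨by linarith, by linarith⟩).1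
  simp only [add_zero] at h
  rw [hl0] at h
  have : s + (t - s) = t := by ring
  rw [this] at h
  linarith

lemma um_inj (l r : ℝ → ℝ) (hu : IsUltramodular l r) (x₀ : ℝ)
    (hx0 : 0 ≤ x₀) (hx1 : x₀ ≤ 1) (hpos : 0 < l x₀) :
    Set.InjOn l (Set.Icc x₀ 1) := by
  have mono := um_mono l r hu
  obtain ⟨hiv, ⟨hl0, _⟩, _, _, hum⟩ := hu
  -- wright convexity
  have wright : ∀ a b h : ℝ, 0 ≤ a → a ≤ b → 0 ≤ h → b + h ≤ 1 →
      l (a + h) - l a ≤ l (b + h) - l b := by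
    intro a b h ha hab hh hb1
    have := (hum (b - a) h a (by linarith) hh ha (by linarith)).1
    have e1 : b - a + a = b := by ring
    have e2 : h + a = a + h := by ring
    have e3 : b - a + h + a = b + h := by ring
    rw [e1, e2, e3] at this
    linarith
  -- now the core argument
  have key : ∀ s t : ℝ, x₀ ≤ s → s < t → t ≤ 1 → l s < l t := by
    intro s t hs hst ht1
    rcases lt_or_ge (l s) (l t) with h | h
    · exact h
    exfalso
    have hls : l s = l t := le_antisymm (mono s t (by linarith) hst.le ht1) h
    set h0 := t - s with hh0
    have hh0pos : 0 < h0 := by simp [hh0]; linarith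
    -- step 1
    have step1 : ∀ a : ℝ, 0 ≤ a → a ≤ s → l (a + h0) = l a := by
      intro a ha has
      have w := wright a s h0 ha has hh0pos.le (by simp [hh0]; linarith)
      have e : s + h0 = t := by simp [hh0]
      rw [e, ← hls] at w
      have m := mono a (a + h0) ha (by linarith) (by linarith)
      linarith
    -- step 2
    have step2 : ∀ n : ℕ, 0 ≤ s - n * h0 → l (s - n * h0) = l s := by
      intro n
      induction n with
      | zero => intro _; norm_num
      | succ n ih =>
        intro hn
        push_cast at hn ⊢
        have h1 : s - (n + 1) * h0 + h0 = s - n * h0 := by ring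
        have e := step1 (s - (n + 1) * h0) hn (by nlinarith)
        rw [h1] at e
        rw [← e]
        exact ih (by nlinarith)
    have hlh0 : l h0 = 0 := by
      have := step1 0 le_rfl (by linarith)
      rw [zero_add, hl0] at this; exact this
    -- floor argument
    have hsx : 0 ≤ s := by linarith
    set n := Nat.floor (s / h0) with hn
    have h1 : (n : ℝ) ≤ s / h0 := Nat.floor_le (by positivity)
    have h2 : s / h0 < n + 1 := Nat.lt_floor_add_one _
    have hu0 : 0 ≤ s - n * h0 := by
      have := (le_div_iff₀ hh0pos).mp h1
      linarith
    have hult : s - n * h0 < h0 := by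
      have := (div_lt_iff₀ hh0pos).mp h2
      nlinarith
    have hval : l (s - n * h0) = l s := step2 n hu0
    have hlsx : 0 < l s := lt_of_lt_of_le hpos (mono x₀ s hx0 hs (by linarith))
    have : l (s - n * h0) ≤ l h0 := mono _ _ hu0 hult.le (by linarith)
    rw [hval, hlh0] at this
    linarith
  intro a ha b hb hab
  rcases lt_trichotomy a b with h | h | h
  · exact absurd hab (ne_of_lt (key a b ha.1 h hb.2))
  · exact h
  · exact absurd hab.symm (ne_of_lt (key b a hb.1 h ha.2))

lemma um_uncount (l r : ℝ → ℝ) (hu : IsUltramodular l r) (x₀ : ℝ)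
    (hx : x₀ ∈ Set.Ioo (0:ℝ) 1) (hpos : 0 < l x₀) :
    ¬ ((fun x => (l x, r x)) '' Set.Icc (0:ℝ) 1).Countable := by
  intro hc
  have h1 : ((fun x => (l x, r x)) '' Set.Icc x₀ 1).Countable :=
    hc.mono (Set.image_mono (Set.Icc_subset_Icc hx.1.le le_rfl))
  have hinj : Set.InjOn (fun x => (l x, r x)) (Set.Icc x₀ 1) := by
    intro a ha b hb hab
    exact um_inj l r hu x₀ hx.1.le hx.2.le hpos ha hb (congrArg Prod.fst hab)
  have h2 : (Set.Icc x₀ 1).Countable :=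
    Set.countable_of_injective_of_countable_image hinj h1
  have h3 := h2.le_aleph0
  rw [Cardinal.mk_Icc_real hx.2] at h3
  exact absurd h3 (not_le.mpr Cardinal.aleph0_lt_continuum)

lemma um_dual (l r : ℝ → ℝ) (hu : IsUltramodular l r) :
    IsUltramodular (fun y => 1 - r (1 - y)) (fun y => 1 - l (1 - y)) := by
  obtain ⟨hiv, ⟨hl0, hr0⟩, ⟨hl1, hr1⟩, hsym, hum⟩ := hu
  refine ⟨?_, ⟨by simp [hr1], by simp [hl1]⟩, ⟨by simp [hr0], by simp [hl0]⟩, ?_, ?_⟩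
  · intro x hx
    have h := hiv (1 - x) ⟨by linarith [hx.2], by linarith [hx.1]⟩
    dsimp only
    exact ⟨by linarith [h.2.2], by linarith [h.2.1], by linarith [h.1]⟩
  · intro x hx
    have hs := hsym (1 - x) ⟨by linarith [hx.2], by linarith [hx.1]⟩
    have e : 1 - (1 - x) = x := by ring
    rw [e] at hs
    constructor
    · simp only [e]; linarith [hs.1]
    · simp only [e]; linarith [hs.2]
  · intro a b c ha hb hc habc
    have h := hum a b (1 - a - b - c) ha hb (by linarith) (by linarith)
    have e1 : 1 - (a + c) = b + (1 - a - b - c) := by ring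
    have e2 : 1 - (b + c) = a + (1 - a - b - c) := by ring
    have e3 : 1 - (a + b + c) = 1 - a - b - c := by ring
    have e4 : a + b + (1 - a - b - c) = 1 - c := by ring
    constructor
    · simp only [e1, e2, e3]
      rw [e4] at h
      linarith [h.2]
    · simp only [e1, e2, e3]
      rw [e4] at h
      linarith [h.1]

theorem ultramodular_range (l r : ℝ → ℝ) (hu : IsUltramodular l r) :
    ((∀ x ∈ Set.Ioo (0:ℝ) 1, l x = 0 ∧ r x = 1) ∧
      (fun x => (l x, r x)) '' Set.Icc (0:ℝ) 1 =
        {((0:ℝ), (0:ℝ)), (1, 1), (0, 1)}) ∨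
    ¬ ((fun x => (l x, r x)) '' Set.Icc (0:ℝ) 1).Countable := by
  obtain ⟨hiv, ⟨hl0, hr0⟩, ⟨hl1, hr1⟩, hsym, hum⟩ := hu
  have hu' : IsUltramodular l r := ⟨hiv, ⟨hl0, hr0⟩, ⟨hl1, hr1⟩, hsym, hum⟩
  by_cases hz : ∀ x ∈ Set.Ioo (0:ℝ) 1, l x = 0 ∧ r x = 1
  · left
    refine ⟨hz, ?_⟩
    apply Set.Subset.antisymm
    · rintro p ⟨x, hx, rfl⟩
      rcases eq_or_lt_of_le hx.1 with h0 | h0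
      · simp [← h0, hl0, hr0]
      rcases eq_or_lt_of_le hx.2 with h1 | h1
      · simp [h1, hl1, hr1]
      · have := hz x ⟨h0, h1⟩
        simp [this.1, this.2]
    · rintro p hp
      simp only [Set.mem_insert_iff, Set.mem_singleton_iff] at hp
      rcases hp with rfl | rfl | rfl
      · exact ⟨0, ⟨le_rfl, zero_le_one⟩, by simp [hl0, hr0]⟩
      · exact ⟨1, ⟨zero_le_one, le_rfl⟩, by simp [hl1, hr1]⟩
      · have h := hz (1/2) ⟨by norm_num, by norm_num⟩
        norm_num at h
        exact ⟨1/2, ⟨by norm_num, by norm_num⟩, by norm_num [h.1, h.2]⟩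
  · right
    push_neg at hz
    obtain ⟨x, hx, hne⟩ := hz
    by_cases hlx : l x = 0
    · -- then r x ≠ 1, so r x < 1
      have hrx : r x ≠ 1 := fun h => hne hlx h
      have hrlt : r x < 1 := lt_of_le_of_ne (hiv x ⟨hx.1.le, hx.2.le⟩).2.2 hrx
      have hdual := um_dual l r hu'
      have hpos : 0 < (fun y => 1 - r (1 - y)) (1 - x) := by
        simp only
        have : 1 - (1 - x) = x := by ring
        rw [this]; linarith
      have hun := um_uncount _ _ hdual (1 - x) ⟨by linarith [hx.2], by linarith [hx.1]⟩ hpos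
      intro hc
      apply hun
      have : ((fun y => (1 - r (1 - y), 1 - l (1 - y))) '' Set.Icc (0:ℝ) 1) ⊆
          (fun p : ℝ × ℝ => (1 - p.2, 1 - p.1)) '' ((fun x => (l x, r x)) '' Set.Icc (0:ℝ) 1) := by
        rintro p ⟨y, hy, rfl⟩
        exact ⟨(l (1 - y), r (1 - y)), ⟨1 - y, ⟨by linarith [hy.2], by linarith [hy.1]⟩, rfl⟩, rfl⟩
      exact ((hc.image _).mono this)
    · have hpos : 0 < l x := lt_of_le_of_ne (hiv x ⟨hx.1.le, hx.2.le⟩).1 (Ne.symm hlx)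
      exact um_uncount l r hu' x hx hpos
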